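/- Let e ≥ 1 be an integer and q = 3^{2e+1}. The achromatic number of the polarity graph GH_q^π equals q³, and its pseudo-achromatic number also equals q³. -/

import Mathlib

/-- A complete partition of a graph `G` into `r` parts, encoded as a coloring
`c : V → Fin r` such that between any two distinct color classes there is an edge. -/
def IsCompletePartition {V : Type*} (G : SimpleGraph V) {r : ℕ} (c : V → Fin r) : Prop :=
  ∀ i j : Fin r, i ≠ j → ∃ u v : V, c u = i ∧ c v = j ∧ G.Adj u v

/-- The pseudo-achromatic number: the largest `r` such that `G` admits a complete
partition into `r` parts. -/
noncomputable def pseudoAchromatic {V : Type*} (G : SimpleGraph V) : ℕ :=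
  sSup {r : ℕ | ∃ c : V → Fin r, IsCompletePartition G c}

/-- The achromatic number: the largest `r` such that `G` admits a complete
partition into `r` independent parts. -/
noncomputable def achromatic {V : Type*} (G : SimpleGraph V) : ℕ :=
  sSup {r : ℕ | ∃ c : V → Fin r, IsCompletePartition G c ∧
    ∀ u v : V, c u = c v → ¬ G.Adj u v}

/-- The polarity graph `GH_q^π` of the biaffine part of the classical generalized
hexagon, for `q = 3^(2e+1)`: vertices are quintuples `(p₁,p₂,p₃,p₄,p₅)` over `F_q`,
with `p` adjacent to `r` iff they are distinct and
`p₂ + r₄^(3^e) = p₁ r₁^(3^(e+1))`, `p₃ + r₅^(3^e) = p₁² r₁^(3^(e+1))`,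
`p₄ + r₂^(3^(e+1)) = p₁³ r₁^(3^(e+1))`, and `p₅ + r₃^(3^(e+1)) = p₁³ r₁^(2·3^(e+1))`. -/
def GHPolarityGraph (e : ℕ) (F : Type*) [Field F] :
    SimpleGraph (F × F × F × F × F) :=
  SimpleGraph.fromRel (fun p r =>
    p.2.1 + r.2.2.2.1 ^ (3 ^ e) = p.1 * r.1 ^ (3 ^ (e + 1)) ∧
    p.2.2.1 + r.2.2.2.2 ^ (3 ^ e) = p.1 ^ 2 * r.1 ^ (3 ^ (e + 1)) ∧
    p.2.2.2.1 + r.2.1 ^ (3 ^ (e + 1)) = p.1 ^ 3 * r.1 ^ (3 ^ (e + 1)) ∧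
    p.2.2.2.2 + r.2.2.1 ^ (3 ^ (e + 1)) = p.1 ^ 3 * r.1 ^ (2 * 3 ^ (e + 1)))

namespace GHAux

def S (e : ℕ) {F : Type*} [Field F] (p r : F × F × F × F × F) : Prop :=
  p.2.1 + r.2.2.2.1 ^ (3 ^ e) = p.1 * r.1 ^ (3 ^ (e + 1)) ∧
  p.2.2.1 + r.2.2.2.2 ^ (3 ^ e) = p.1 ^ 2 * r.1 ^ (3 ^ (e + 1)) ∧
  p.2.2.2.1 + r.2.1 ^ (3 ^ (e + 1)) = p.1 ^ 3 * r.1 ^ (3 ^ (e + 1)) ∧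
  p.2.2.2.2 + r.2.2.1 ^ (3 ^ (e + 1)) = p.1 ^ 3 * r.1 ^ (2 * 3 ^ (e + 1))

lemma adj_iff (e : ℕ) {F : Type*} [Field F] (p r : F × F × F × F × F) :
    (GHPolarityGraph e F).Adj p r ↔ p ≠ r ∧ (S e p r ∨ S e r p) := Iff.rfl

variable {F : Type*} [Field F] [Fintype F] {e : ℕ}

lemma char3 (hc : Fintype.card F = 3 ^ (2 * e + 1)) : CharP F 3 := by
  obtain ⟨n, hp, hcard⟩ := FiniteField.card F (ringChar F)
  have hdvd : ringChar F ∣ 3 ^ (2 * e + 1) := by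
    rw [← hc, hcard]
    exact dvd_pow_self _ n.2.ne'
  have h3 : ringChar F = 3 :=
    (Nat.prime_dvd_prime_iff_eq hp Nat.prime_three).mp (hp.dvd_of_dvd_pow hdvd)
  rw [← h3]; exact ringChar.charP F

lemma pow_card_eq (hc : Fintype.card F = 3 ^ (2 * e + 1)) (x : F) :
    x ^ (3 : ℕ) ^ (2 * e + 1) = x := by
  rw [← hc]; exact FiniteField.pow_card x

lemma pEE' (hc : Fintype.card F = 3 ^ (2 * e + 1)) (x : F) :
    (x ^ (3 : ℕ) ^ e) ^ (3 : ℕ) ^ (e + 1) = x := by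
  rw [← pow_mul, ← pow_add, show e + (e + 1) = 2 * e + 1 by omega, pow_card_eq hc]

lemma pE'E (hc : Fintype.card F = 3 ^ (2 * e + 1)) (x : F) :
    (x ^ (3 : ℕ) ^ (e + 1)) ^ (3 : ℕ) ^ e = x := by
  rw [← pow_mul, ← pow_add, show e + 1 + e = 2 * e + 1 by omega, pow_card_eq hc]

lemma pE'E' (hc : Fintype.card F = 3 ^ (2 * e + 1)) (x : F) :
    (x ^ (3 : ℕ) ^ (e + 1)) ^ (3 : ℕ) ^ (e + 1) = x ^ 3 := by
  rw [← pow_mul, show (3:ℕ) ^ (e+1) * 3 ^ (e+1) = 3 ^ (2*e+1) * 3 by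
    rw [← pow_add, ← pow_succ]; congr 1; omega, pow_mul, pow_card_eq hc]

lemma p3E (x : F) : (x ^ 3) ^ (3 : ℕ) ^ e = x ^ (3 : ℕ) ^ (e + 1) := by
  rw [← pow_mul]; congr 1; rw [pow_succ]; ring

lemma p2E'E (hc : Fintype.card F = 3 ^ (2 * e + 1)) (x : F) :
    (x ^ (2 * (3 : ℕ) ^ (e + 1))) ^ (3 : ℕ) ^ e = x ^ 2 := by
  rw [← pow_mul, show 2 * (3:ℕ) ^ (e+1) * 3 ^ e = 3 ^ (2*e+1) * 2 by
    rw [Nat.mul_assoc, ← pow_add, show e+1+e = 2*e+1 from by omega, Nat.mul_comm],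
    pow_mul, pow_card_eq hc]

lemma S_symm (hc : Fintype.card F = 3 ^ (2 * e + 1)) {p r : F × F × F × F × F}
    (h : S e p r) : S e r p := by
  haveI := char3 hc
  haveI : Fact (Nat.Prime 3) := ⟨Nat.prime_three⟩
  obtain ⟨p1, p2, p3, p4, p5⟩ := p
  obtain ⟨r1, r2, r3, r4, r5⟩ := r
  obtain ⟨h1, h2, h3, h4⟩ := h
  simp only [S] at *
  refine ⟨?_, ?_, ?_, ?_⟩
  · -- r2 + p4 ^ 3^e = r1 * p1 ^ 3^(e+1)
    have e3 : p4 = p1 ^ 3 * r1 ^ (3:ℕ) ^ (e+1) - r2 ^ (3:ℕ) ^ (e+1) := eq_sub_of_add_eq h3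
    rw [e3, sub_pow_char_pow, mul_pow, p3E, pE'E hc, pE'E hc]
    ring
  · -- r3 + p5 ^ 3^e = r1 ^ 2 * p1 ^ 3^(e+1)
    have e4 : p5 = p1 ^ 3 * r1 ^ (2 * (3:ℕ) ^ (e+1)) - r3 ^ (3:ℕ) ^ (e+1) :=
      eq_sub_of_add_eq h4
    rw [e4, sub_pow_char_pow, mul_pow, p3E, p2E'E hc, pE'E hc]
    ring
  · -- r4 + p2 ^ 3^(e+1) = r1 ^ 3 * p1 ^ 3^(e+1)
    have e1 : r4 ^ (3:ℕ) ^ e = p1 * r1 ^ (3:ℕ) ^ (e+1) - p2 := eq_sub_of_add_eq' h1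
    have : r4 = (p1 * r1 ^ (3:ℕ) ^ (e+1) - p2) ^ (3:ℕ) ^ (e+1) := by
      rw [← e1, pEE' hc]
    rw [this, sub_pow_char_pow, mul_pow, pE'E' hc]
    ring
  · -- r5 + p3 ^ 3^(e+1) = r1 ^ 3 * p1 ^ (2 * 3^(e+1))
    have e2 : r5 ^ (3:ℕ) ^ e = p1 ^ 2 * r1 ^ (3:ℕ) ^ (e+1) - p3 := eq_sub_of_add_eq' h2
    have : r5 = (p1 ^ 2 * r1 ^ (3:ℕ) ^ (e+1) - p3) ^ (3:ℕ) ^ (e+1) := by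
      rw [← e2, pEE' hc]
    rw [this, sub_pow_char_pow, mul_pow, pE'E' hc, ← pow_mul]
    ring

lemma S_det {p p' r : F × F × F × F × F}
    (h : S e p r) (h' : S e p' r) (h1 : p.1 = p'.1) : p = p' := by
  obtain ⟨p1, p2, p3, p4, p5⟩ := p
  obtain ⟨q1, q2, q3, q4, q5⟩ := p'
  obtain ⟨r1, r2, r3, r4, r5⟩ := r
  simp only [S] at *
  subst h1
  obtain ⟨a1, a2, a3, a4⟩ := h
  obtain ⟨b1, b2, b3, b4⟩ := h'
  have e2 : p2 = q2 := add_right_cancel (a1.trans b1.symm)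
  have e3 : p3 = q3 := add_right_cancel (a2.trans b2.symm)
  have e4 : p4 = q4 := add_right_cancel (a3.trans b3.symm)
  have e5 : p5 = q5 := add_right_cancel (a4.trans b4.symm)
  subst e2 e3 e4 e5
  rfl

set_option linter.unusedSectionVars false in
/-- If `S e p r` holds and the first three coordinates agree, then `p = r`. -/
lemma S_same (hc : Fintype.card F = 3 ^ (2 * e + 1)) {p r : F × F × F × F × F}
    (h : S e p r) (h1 : p.1 = r.1) (h2 : p.2.1 = r.2.1) (h3 : p.2.2.1 = r.2.2.1) :
    p = r := by
  obtain ⟨p1, p2, p3, p4, p5⟩ := p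
  obtain ⟨r1, r2, r3, r4, r5⟩ := r
  simp only [S] at *
  subst h1 h2 h3
  obtain ⟨a1, a2, a3, a4⟩ := h
  have e4 : p4 = r4 := by
    have hr4 : r4 = (p1 * p1 ^ (3:ℕ) ^ (e+1) - p2) ^ (3:ℕ) ^ (e+1) := by
      rw [← eq_sub_of_add_eq' a1, pEE' hc]
    have hp4 : p4 = p1 ^ 3 * p1 ^ (3:ℕ) ^ (e+1) - p2 ^ (3:ℕ) ^ (e+1) := eq_sub_of_add_eq a3
    haveI := char3 hc
    haveI : Fact (Nat.Prime 3) := ⟨Nat.prime_three⟩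
    rw [hr4, sub_pow_char_pow, mul_pow, pE'E' hc, hp4]
    ring
  have e5 : p5 = r5 := by
    have hr5 : r5 = (p1 ^ 2 * p1 ^ (3:ℕ) ^ (e+1) - p3) ^ (3:ℕ) ^ (e+1) := by
      rw [← eq_sub_of_add_eq' a2, pEE' hc]
    have hp5 : p5 = p1 ^ 3 * p1 ^ (2 * (3:ℕ) ^ (e+1)) - p3 ^ (3:ℕ) ^ (e+1) :=
      eq_sub_of_add_eq a4
    haveI := char3 hc
    haveI : Fact (Nat.Prime 3) := ⟨Nat.prime_three⟩
    rw [hr5, sub_pow_char_pow, mul_pow, pE'E' hc, hp5, ← pow_mul]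
    ring
  subst e4 e5
  rfl


lemma S_of_adj (hc : Fintype.card F = 3 ^ (2 * e + 1)) {p r : F × F × F × F × F}
    (h : (GHPolarityGraph e F).Adj p r) : S e p r := by
  rw [adj_iff] at h
  rcases h.2 with h' | h'
  · exact h'
  · exact S_symm hc h'

/-- Upper bound: any complete partition has at most `q ^ 3` parts. -/
lemma upper_bound (hc : Fintype.card F = 3 ^ (2 * e + 1)) {r : ℕ}
    (c : F × F × F × F × F → Fin r)
    (hcp : IsCompletePartition (GHPolarityGraph e F) c) :
    r ≤ (3 ^ (2 * e + 1)) ^ 3 := by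
  classical
  set Q : ℕ := 3 ^ (2 * e + 1) with hQ
  have hQpos : 0 < Q := by rw [hQ]; exact Nat.pow_pos (by norm_num)
  -- injective map from ordered pairs of colors into (V × F) ⊕ Fin r
  have key : r * r ≤ Q ^ 6 + r := by
    set g : Fin r × Fin r → ((F × F × F × F × F) × F) ⊕ Fin r := fun z =>
      if h : z.1 = z.2 then Sum.inr z.1
      else Sum.inl ((hcp z.1 z.2 h).choose_spec.choose, (hcp z.1 z.2 h).choose.1)
      with hg
    have hginj : Function.Injective g := by
      intro z w hzw
      simp only [hg] at hzw
      by_cases hz : z.1 = z.2 <;> by_cases hw : w.1 = w.2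
      · rw [dif_pos hz, dif_pos hw] at hzw
        have h1 := Sum.inr.inj hzw
        exact Prod.ext h1 (by rw [← hz, ← hw, h1])
      · rw [dif_pos hz, dif_neg hw] at hzw
        exact absurd hzw (by simp)
      · rw [dif_neg hz, dif_pos hw] at hzw
        exact absurd hzw (by simp)
      · -- both off-diagonal
        rw [dif_neg hz, dif_neg hw] at hzw
        have hpair := Sum.inl.inj hzw
        have hv := congrArg Prod.fst hpair
        have hu1 := congrArg Prod.snd hpair
        simp only at hv hu1
        obtain ⟨hcu, hcv, hadj⟩ := (hcp z.1 z.2 hz).choose_spec.choose_spec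
        obtain ⟨hcu', hcv', hadj'⟩ := (hcp w.1 w.2 hw).choose_spec.choose_spec
        have hS : S e (hcp z.1 z.2 hz).choose (hcp z.1 z.2 hz).choose_spec.choose :=
          S_of_adj hc hadj
        have hS' : S e (hcp w.1 w.2 hw).choose (hcp z.1 z.2 hz).choose_spec.choose := by
          rw [hv]; exact S_of_adj hc hadj'
        have hu : (hcp z.1 z.2 hz).choose = (hcp w.1 w.2 hw).choose :=
          S_det hS hS' hu1
        refine Prod.ext ?_ ?_
        · rw [← hcu, ← hcu', hu]
        · rw [← hcv, ← hcv', hv]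
    have hle := Fintype.card_le_of_injective g hginj
    have hcards : Fintype.card ((((F × F × F × F × F) × F)) ⊕ Fin r) = Q ^ 6 + r := by
      simp only [Fintype.card_sum, Fintype.card_prod, Fintype.card_fin, hc, ← hQ]
      ring
    rwa [Fintype.card_prod, Fintype.card_fin, hcards] at hle
  -- arithmetic
  by_contra hcon
  push_neg at hcon
  have h1 : (Q ^ 3 + 1) * r ≤ r * r := Nat.mul_le_mul_right r hcon
  have h2 : Q ^ 3 * r + r ≤ Q ^ 6 + r := by
    calc Q ^ 3 * r + r = (Q ^ 3 + 1) * r := by ring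
    _ ≤ r * r := h1
    _ ≤ Q ^ 6 + r := key
  have h3 : Q ^ 3 * r ≤ Q ^ 3 * Q ^ 3 := by
    have := Nat.le_of_add_le_add_right h2
    calc Q ^ 3 * r ≤ Q ^ 6 := this
    _ = Q ^ 3 * Q ^ 3 := by ring
  have h4 : r ≤ Q ^ 3 := Nat.le_of_mul_le_mul_left h3 (pow_pos hQpos 3)
  omega

/-- Lower bound: an explicit complete partition into `q ^ 3` independent parts. -/
lemma lower_bound (hc : Fintype.card F = 3 ^ (2 * e + 1)) :
    ∃ c : F × F × F × F × F → Fin ((3 ^ (2 * e + 1)) ^ 3),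
      IsCompletePartition (GHPolarityGraph e F) c ∧
      ∀ u v, c u = c v → ¬ (GHPolarityGraph e F).Adj u v := by
  classical
  have hcard3 : Fintype.card (F × F × F) = (3 ^ (2 * e + 1)) ^ 3 := by
    simp [Fintype.card_prod, hc]; ring
  let E : (F × F × F) ≃ Fin ((3 ^ (2 * e + 1)) ^ 3) := Fintype.equivFinOfCardEq hcard3
  refine ⟨fun p => E (p.1, p.2.1, p.2.2.1), ?_, ?_⟩
  · intro i j hij
    set a : F := (E.symm i).1
    set b : F := (E.symm i).2.1
    set c0 : F := (E.symm i).2.2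
    set a' : F := (E.symm j).1
    set b' : F := (E.symm j).2.1
    set c' : F := (E.symm j).2.2
    refine ⟨(a, b, c0,
          a ^ 3 * a' ^ (3:ℕ) ^ (e+1) - b' ^ (3:ℕ) ^ (e+1),
          a ^ 3 * a' ^ (2 * (3:ℕ) ^ (e+1)) - c' ^ (3:ℕ) ^ (e+1)),
        (a', b', c',
          (a * a' ^ (3:ℕ) ^ (e+1) - b) ^ (3:ℕ) ^ (e+1),
          (a ^ 2 * a' ^ (3:ℕ) ^ (e+1) - c0) ^ (3:ℕ) ^ (e+1)), ?_, ?_, ?_⟩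
    · show E (a, b, c0) = i
      have : (a, b, c0) = E.symm i := rfl
      rw [this, Equiv.apply_symm_apply]
    · show E (a', b', c') = j
      have : (a', b', c') = E.symm j := rfl
      rw [this, Equiv.apply_symm_apply]
    · rw [adj_iff]
      constructor
      · intro heq
        apply hij
        simp only [Prod.mk.injEq] at heq
        obtain ⟨h1, h2, h3, -, -⟩ := heq
        have : E.symm i = E.symm j := by
          have : (a, b, c0) = (a', b', c') := by rw [h1, h2, h3]
          calc E.symm i = (a, b, c0) := rfl
          _ = (a', b', c') := this
          _ = E.symm j := rfl
        exact E.symm.injective this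
      · left
        refine ⟨?_, ?_, ?_, ?_⟩
        · show b + ((a * a' ^ (3:ℕ) ^ (e+1) - b) ^ (3:ℕ) ^ (e+1)) ^ (3:ℕ) ^ e = _
          rw [pE'E hc]; ring
        · show c0 + ((a ^ 2 * a' ^ (3:ℕ) ^ (e+1) - c0) ^ (3:ℕ) ^ (e+1)) ^ (3:ℕ) ^ e = _
          rw [pE'E hc]; ring
        · show a ^ 3 * a' ^ (3:ℕ) ^ (e+1) - b' ^ (3:ℕ) ^ (e+1) + b' ^ (3:ℕ) ^ (e+1) = _
          ring
        · show a ^ 3 * a' ^ (2 * (3:ℕ) ^ (e+1)) - c' ^ (3:ℕ) ^ (e+1)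
              + c' ^ (3:ℕ) ^ (e+1) = _
          ring
  · intro u v hcuv hadj
    have htr : (u.1, u.2.1, u.2.2.1) = (v.1, v.2.1, v.2.2.1) := E.injective hcuv
    simp only [Prod.mk.injEq] at htr
    obtain ⟨h1, h2, h3⟩ := htr
    rw [adj_iff] at hadj
    obtain ⟨hne, hS | hS⟩ := hadj
    · exact hne (S_same hc hS h1 h2 h3)
    · exact hne (S_same hc hS h1.symm h2.symm h3.symm).symm

end GHAux

theorem achromatic_and_pseudoAchromatic_GHPolarityGraph
    (e : ℕ) (he : 1 ≤ e) (q : ℕ) (hq : q = 3 ^ (2 * e + 1))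
    (F : Type*) [Field F] [Fintype F] (hF : Fintype.card F = q) :
    achromatic (GHPolarityGraph e F) = q ^ 3 ∧
    pseudoAchromatic (GHPolarityGraph e F) = q ^ 3 := by
  subst hq
  have hub : ∀ x ∈ {r : ℕ | ∃ c : F × F × F × F × F → Fin r,
      IsCompletePartition (GHPolarityGraph e F) c}, x ≤ (3 ^ (2 * e + 1)) ^ 3 := by
    rintro x ⟨c, hc⟩
    exact GHAux.upper_bound hF c hc
  have hubA : ∀ x ∈ {r : ℕ | ∃ c : F × F × F × F × F → Fin r,
      IsCompletePartition (GHPolarityGraph e F) c ∧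
      ∀ u v, c u = c v → ¬ (GHPolarityGraph e F).Adj u v}, x ≤ (3 ^ (2 * e + 1)) ^ 3 := by
    rintro x ⟨c, hc, -⟩
    exact hub x ⟨c, hc⟩
  obtain ⟨c, hc1, hc2⟩ := GHAux.lower_bound hF
  constructor
  · refine le_antisymm (csSup_le' hubA) (le_csSup ⟨_, hubA⟩ ?_)
    exact ⟨c, hc1, hc2⟩
  · refine le_antisymm (csSup_le' hub) (le_csSup ⟨_, hub⟩ ?_)
    exact ⟨c, hc1⟩
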